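/- arXiv:1807.08366 — 2 statements merged into one kernel-verified Lean document; each statement's English description precedes it below -/
import Mathlib

section
/- Let H(K) be a reproducing kernel Hilbert space on X with kernel K, and let f : X → ℂ. Then f ∈ H(K) with ‖f‖ ≤ c if and only if the kernel (z,w) ↦ c²K(z,w) − f(z)\overline{f(w)} is a positive kernel on X. -/
open Complex Finset
open scoped ComplexOrder

/-- A positive (semi-definite) kernel on `X`: self-adjoint and all finite
Gram-type sums are nonnegative. -/
def IsPositiveKernel {X : Type*} (K : X → X → ℂ) : Prop :=
  (∀ x y, K x y = starRingEnd ℂ (K y x)) ∧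
  ∀ (n : ℕ) (l : Fin n → X) (a : Fin n → ℂ),
    0 ≤ ∑ i, ∑ j, a i * starRingEnd ℂ (a j) * K (l i) (l j)


lemma double_sum_eq' {X H : Type*} [NormedAddCommGroup H] [InnerProductSpace ℂ H]
    (k : X → H) (f : X → ℂ) (c : ℝ) (n : ℕ) (l : Fin n → X) (a : Fin n → ℂ) :
    ∑ i, ∑ j, a i * starRingEnd ℂ (a j) *
        ((c : ℂ) ^ 2 * (inner ℂ (k (l i)) (k (l j)) : ℂ) - f (l i) * starRingEnd ℂ (f (l j)))
      = (c : ℂ) ^ 2 * (inner ℂ (∑ i, starRingEnd ℂ (a i) • k (l i))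
            (∑ j, starRingEnd ℂ (a j) • k (l j)) : ℂ)
        - (∑ i, a i * f (l i)) * starRingEnd ℂ (∑ j, a j * f (l j)) := by
  simp only [sum_inner, inner_sum, inner_smul_left, inner_smul_right, RingHomCompTriple.comp_apply,
    Finset.mul_sum, map_sum, Finset.sum_mul, Complex.conj_conj, map_mul]
  conv_lhs => rw [Finset.sum_comm]
  rw [← Finset.sum_sub_distrib]
  refine Finset.sum_congr rfl fun j _ => ?_
  rw [← Finset.sum_sub_distrib]
  refine Finset.sum_congr rfl fun i _ => ?_
  simp only [RingHom.id_apply]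
  ring

/-- rewritten as a real number -/
lemma double_sum_eq_real {X H : Type*} [NormedAddCommGroup H] [InnerProductSpace ℂ H]
    (k : X → H) (f : X → ℂ) (c : ℝ) (n : ℕ) (l : Fin n → X) (a : Fin n → ℂ) :
    ∑ i, ∑ j, a i * starRingEnd ℂ (a j) *
        ((c : ℂ) ^ 2 * (inner ℂ (k (l i)) (k (l j)) : ℂ) - f (l i) * starRingEnd ℂ (f (l j)))
      = ((c ^ 2 * ‖∑ i, starRingEnd ℂ (a i) • k (l i)‖ ^ 2
          - ‖∑ i, a i * f (l i)‖ ^ 2 : ℝ) : ℂ) := by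
  rw [double_sum_eq', inner_self_eq_norm_sq_to_K, RCLike.mul_conj]
  push_cast
  norm_num


private theorem aux_mem_rkhs {X H : Type*} [NormedAddCommGroup H] [InnerProductSpace ℂ H] [CompleteSpace H]
    (k : X → H) (J : H →ₗ[ℂ] (X → ℂ)) (hJ : Function.Injective J)
    (hrep : ∀ (g : H) (w : X), (inner ℂ (k w) g : ℂ) = J g w)
    (f : X → ℂ) (c : ℝ) (hc : 0 ≤ c) :
    (∃ g : H, J g = f ∧ ‖g‖ ≤ c) ↔
      (∀ x y, ((c : ℂ) ^ 2 * (inner ℂ (k x) (k y) : ℂ) - f x * starRingEnd ℂ (f y))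
          = starRingEnd ℂ ((c : ℂ) ^ 2 * (inner ℂ (k y) (k x) : ℂ) - f y * starRingEnd ℂ (f x))) ∧
      ∀ (n : ℕ) (l : Fin n → X) (a : Fin n → ℂ),
        0 ≤ ∑ i, ∑ j, a i * starRingEnd ℂ (a j) *
          ((c : ℂ) ^ 2 * (inner ℂ (k (l i)) (k (l j)) : ℂ) - f (l i) * starRingEnd ℂ (f (l j))) := by
  constructor
  · rintro ⟨g, hg, hgc⟩
    have hf : ∀ w, f w = (inner ℂ (k w) g : ℂ) := fun w => by rw [hrep, hg]
    constructor
    · intro x y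
      simp only [map_sub, map_mul, map_pow, Complex.conj_ofReal, inner_conj_symm,
        Complex.conj_conj]
      ring
    · intro n l a
      rw [double_sum_eq_real]
      rw [Complex.zero_le_real]
      set u := ∑ i, starRingEnd ℂ (a i) • k (l i) with hu
      have hs : ∑ i, a i * f (l i) = (inner ℂ u g : ℂ) := by
        rw [hu, sum_inner]
        refine Finset.sum_congr rfl fun i _ => ?_
        rw [inner_smul_left, Complex.conj_conj, hf]
      rw [hs]
      have h1 : ‖(inner ℂ u g : ℂ)‖ ≤ ‖u‖ * c :=
        le_trans (norm_inner_le_norm u g) (by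
          exact mul_le_mul_of_nonneg_left hgc (norm_nonneg u))
      nlinarith [norm_nonneg (inner ℂ u g : ℂ), norm_nonneg u]
  · rintro ⟨_, hpos⟩
    -- key bound for finsupps
    set T : (X →₀ ℂ) →ₗ[ℂ] H := Finsupp.linearCombination ℂ k with hT
    set φ : (X →₀ ℂ) →ₗ[ℂ] ℂ := Finsupp.linearCombination ℂ (fun x => starRingEnd ℂ (f x))
      with hφ
    have key : ∀ b : X →₀ ℂ, ‖φ b‖ ≤ c * ‖T b‖ := by
      intro b
      classical
      set s := b.support with hsupp
      set n := s.card
      set e := s.equivFin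
      set l : Fin n → X := fun i => (e.symm i : X) with hl
      set a : Fin n → ℂ := fun i => starRingEnd ℂ (b (l i)) with ha
      have hTb : T b = ∑ i, starRingEnd ℂ (a i) • k (l i) := by
        simp only [ha, Complex.conj_conj]
        rw [hT, Finsupp.linearCombination_apply, Finsupp.sum,
          ← Finset.sum_coe_sort s (fun x => b x • k x),
          ← e.symm.sum_comp (fun x : s => b (x : X) • k (x : X))]
      have hφb : starRingEnd ℂ (φ b) = ∑ i, a i * f (l i) := by
        simp only [ha]
        rw [hφ, Finsupp.linearCombination_apply, Finsupp.sum, map_sum,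
          ← Finset.sum_coe_sort s (fun x => starRingEnd ℂ (b x • starRingEnd ℂ (f x))),
          ← e.symm.sum_comp (fun x : s => starRingEnd ℂ (b (x : X) • starRingEnd ℂ (f (x : X))))]
        refine Finset.sum_congr rfl fun i _ => ?_
        simp [smul_eq_mul, hl]
      have h0 := hpos n l a
      rw [double_sum_eq_real, Complex.zero_le_real, ← hTb, ← hφb] at h0
      have h1 : ‖starRingEnd ℂ (φ b)‖ = ‖φ b‖ := by simp
      rw [h1] at h0
      have h2 : ‖φ b‖ ^ 2 ≤ (c * ‖T b‖) ^ 2 := by nlinarith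
      exact le_of_pow_le_pow_left₀ two_ne_zero (mul_nonneg hc (norm_nonneg (T b))) h2
    -- φ descends to range T
    have hker : LinearMap.ker T ≤ LinearMap.ker φ := by
      intro b hb
      rw [LinearMap.mem_ker] at hb ⊢
      have := key b
      rw [hb, norm_zero, mul_zero] at this
      exact norm_le_zero_iff.mp this
    set ℓ₀ : LinearMap.range T →ₗ[ℂ] ℂ :=
      (LinearMap.ker T).liftQ φ hker ∘ₗ (T.quotKerEquivRange).symm.toLinearMap with hℓ₀
    have hℓ₀app : ∀ b : X →₀ ℂ, ℓ₀ ⟨T b, LinearMap.mem_range_self T b⟩ = φ b := by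
      intro b
      have h2 : (⟨T b, LinearMap.mem_range_self T b⟩ : LinearMap.range T)
          = T.quotKerEquivRange (Submodule.Quotient.mk b) :=
        Subtype.ext (T.quotKerEquivRange_apply_mk b).symm
      rw [hℓ₀, LinearMap.comp_apply, h2, LinearEquiv.coe_toLinearMap,
        LinearEquiv.symm_apply_apply, Submodule.liftQ_apply]
    have hℓ₀bound : ∀ u : LinearMap.range T, ‖ℓ₀ u‖ ≤ c * ‖u‖ := by
      rintro ⟨u, hu⟩
      obtain ⟨b, rfl⟩ := LinearMap.mem_range.mp hu
      rw [hℓ₀app b]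
      exact key b
    set ℓ : LinearMap.range T →L[ℂ] ℂ := LinearMap.mkContinuous ℓ₀ c hℓ₀bound with hℓ
    have hℓnorm : ‖ℓ‖ ≤ c := LinearMap.mkContinuous_norm_le ℓ₀ hc hℓ₀bound
    obtain ⟨G, hGext, hGnorm⟩ := exists_extension_norm_eq (LinearMap.range T) ℓ
    set g : H := (InnerProductSpace.toDual ℂ H).symm G with hgdef
    refine ⟨g, ?_, ?_⟩
    · funext w
      rw [← hrep g w]
      have hkw : k w = T (Finsupp.single w 1) := by
        rw [hT, Finsupp.linearCombination_single, one_smul]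
      have h3 : (inner ℂ g (k w) : ℂ) = G (k w) := InnerProductSpace.toDual_symm_apply
      have h4 : G (k w) = starRingEnd ℂ (f w) := by
        rw [hkw]
        have := hGext ⟨T (Finsupp.single w 1), LinearMap.mem_range_self T _⟩
        rw [this, hℓ, LinearMap.mkContinuous_apply, hℓ₀app, hφ,
          Finsupp.linearCombination_single, smul_eq_mul, one_mul]
      rw [← inner_conj_symm, h3, h4, Complex.conj_conj]
    · rw [hgdef]
      rw [LinearIsometryEquiv.norm_map]
      rw [hGnorm]
      exact hℓnorm

/-- `f ∈ H(K)` with `‖f‖ ≤ c` iff `(z,w) ↦ c²K(z,w) − f(z)conj(f(w))` is a positive kernel. -/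
theorem mem_rkhs_iff_positive_kernel {X : Type*} {H : Type*}
    [NormedAddCommGroup H] [InnerProductSpace ℂ H] [CompleteSpace H]
    (k : X → H) (J : H →ₗ[ℂ] (X → ℂ)) (hJ : Function.Injective J)
    (hrep : ∀ (g : H) (w : X), (inner ℂ (k w) g : ℂ) = J g w)
    (f : X → ℂ) (c : ℝ) (hc : 0 ≤ c) :
    (∃ g : H, J g = f ∧ ‖g‖ ≤ c) ↔
      IsPositiveKernel (fun z w =>
        (c : ℂ) ^ 2 * (inner ℂ (k z) (k w) : ℂ) - f z * starRingEnd ℂ (f w)) := by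
  exact aux_mem_rkhs k J hJ hrep f c hc
end

section
/- Let b : 𝔻 → ℂ be holomorphic with |b| ≤ 1 on 𝔻. If there is a constant C with (1 − |b(z)|²)/(1 − |z|²) ≤ C for all z ∈ 𝔻, then b is a finite Blaschke product. -/
open Complex Finset

open Metric



lemma blaschke_sq_identity (a z : ℂ) :
    ‖1 - starRingEnd ℂ a * z‖ ^ 2 - ‖z - a‖ ^ 2
      = (1 - ‖z‖ ^ 2) * (1 - ‖a‖ ^ 2) := by
  simp only [Complex.sq_norm, Complex.normSq_apply, Complex.sub_re, Complex.sub_im,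
    Complex.mul_re, Complex.mul_im, Complex.one_re, Complex.one_im, Complex.conj_re,
    Complex.conj_im]
  ring

lemma w0_sq (C' : ℝ) (hC' : 1 ≤ C') :
    ‖((Real.sqrt (1 - 1/(4*C')) : ℝ) : ℂ)‖ ^ 2 = 1 - 1/(4*C') := by
  have h4 : (0:ℝ) < 4*C' := by linarith
  have h : (0:ℝ) ≤ 1 - 1/(4*C') := by
    have : 1/(4*C') ≤ 1 := by rw [div_le_one h4]; linarith
    linarith
  rw [Complex.norm_real, Real.norm_eq_abs, _root_.sq_abs, Real.sq_sqrt h]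


lemma maxmod (f : ℂ → ℂ) (K : ℝ) (hK : 0 ≤ K)
    (hf : DifferentiableOn ℂ f (Metric.ball (0:ℂ) 1))
    (hbd : ∀ w ∈ Metric.ball (0:ℂ) 1,
      (1 - K * (1 - ‖w‖ ^ 2)) * ‖f w‖ ^ 2 ≤ 1) :
    ∀ z ∈ Metric.ball (0:ℂ) 1, ‖f z‖ ≤ 1 := by
  intro z hz
  have hz1 : ‖z‖ < 1 := by simpa [mem_ball_zero_iff] using hz
  have key : ∀ ε : ℝ, 0 < ε → ε < 1 → (1 - ε) * ‖f z‖ ^ 2 ≤ 1 := by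
    intro ε hε hε1
    set r : ℝ := max ((‖z‖ + 1)/2) (Real.sqrt (1 - ε/(K+1))) with hr_def
    have hK1 : (0:ℝ) < K + 1 := by linarith
    have habsz : (0:ℝ) ≤ ‖z‖ := norm_nonneg z
    have hdivpos : 0 < ε/(K+1) := div_pos hε hK1
    have hra : (‖z‖ + 1)/2 < 1 := by linarith
    have hrb : Real.sqrt (1 - ε/(K+1)) < 1 := by
      rw [Real.sqrt_lt' one_pos]; nlinarith
    have hr1 : r < 1 := max_lt hra hrb
    have hrz : ‖z‖ < r := lt_of_lt_of_le (by linarith) (le_max_left _ _)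
    have hr0 : 0 < r := lt_of_le_of_lt habsz hrz
    have hKr : K * (1 - r^2) ≤ ε := by
      have hsq : 1 - ε/(K+1) ≤ r^2 := by
        by_cases hc : 0 ≤ 1 - ε/(K+1)
        · have h1 : Real.sqrt (1 - ε/(K+1)) ≤ r := le_max_right _ _
          have h2 := Real.sq_sqrt hc
          nlinarith [Real.sqrt_nonneg (1 - ε/(K+1))]
        · nlinarith [sq_nonneg r]
      have h3 : 1 - r^2 ≤ ε/(K+1) := by linarith
      calc K * (1 - r^2) ≤ K * (ε/(K+1)) := mul_le_mul_of_nonneg_left h3 hK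
        _ ≤ ε := by rw [mul_div_assoc', div_le_iff₀ hK1]; nlinarith
    have h1ε : (0:ℝ) < 1 - ε := by linarith
    set M : ℝ := Real.sqrt (1/(1-ε)) with hM_def
    have hMsq : M^2 = 1/(1-ε) := Real.sq_sqrt (div_nonneg zero_le_one h1ε.le)
    have hcl : closure (Metric.ball (0:ℂ) r) = Metric.closedBall (0:ℂ) r :=
      closure_ball (0:ℂ) hr0.ne'
    have hdc : DiffContOnCl ℂ f (Metric.ball (0:ℂ) r) := by
      constructor
      · exact hf.mono (Metric.ball_subset_ball hr1.le)
      · rw [hcl]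
        exact (hf.continuousOn).mono (Metric.closedBall_subset_ball hr1)
    have hfr : ∀ w ∈ frontier (Metric.ball (0:ℂ) r), ‖f w‖ ≤ M := by
      intro w hw
      have hw' : ‖w‖ = r := by
        rw [frontier_ball (0:ℂ) hr0.ne'] at hw
        simpa [mem_sphere_iff_norm] using hw
      have hwball : w ∈ Metric.ball (0:ℂ) 1 := by
        rw [mem_ball_zero_iff]; show ‖w‖ < 1
        rw [hw']; exact hr1
      have h1 := hbd w hwball
      rw [hw'] at h1
      have hfw : ‖f w‖ ^ 2 ≤ 1/(1-ε) := by
        have h2 : 1 - ε ≤ 1 - K * (1 - r^2) := by linarith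
        rw [le_div_iff₀ h1ε]
        nlinarith [sq_nonneg (‖f w‖)]
      rw [show ‖f w‖ = Real.sqrt (‖f w‖^2) from
          (Real.sqrt_sq (norm_nonneg _)).symm]
      exact Real.sqrt_le_sqrt hfw
    have hzc : z ∈ closure (Metric.ball (0:ℂ) r) := by
      rw [hcl]
      exact Metric.mem_closedBall.2 (by simpa [dist_zero_right] using hrz.le)
    have hbound : ‖f z‖ ≤ M :=
      Complex.norm_le_of_forall_mem_frontier_norm_le isBounded_ball hdc hfr hzc
    have habs2 : ‖f z‖ ^ 2 ≤ 1/(1-ε) := by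
      nlinarith [norm_nonneg (f z), Real.sqrt_nonneg (1/(1-ε))]
    rw [le_div_iff₀ h1ε] at habs2
    linarith [habs2]
  have hsq : ‖f z‖ ^ 2 ≤ 1 := by
    by_contra hc
    push_neg at hc
    set s := ‖f z‖ ^ 2 with hs_def
    have hs1 : 1 < s := hc
    have hspos : (0:ℝ) < s := by linarith
    have hε : (0:ℝ) < (s-1)/(2*s) := div_pos (by linarith) (by linarith)
    have hε1 : (s-1)/(2*s) < 1 := by rw [div_lt_one (by linarith)]; linarith
    have h5 := key _ hε hε1
    have h2 : ((s-1)/(2*s))*s = (s-1)/2 := by field_simp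
    rw [sub_mul, one_mul, h2] at h5
    linarith
  nlinarith [norm_nonneg (f z)]

lemma const_of_nonvanishing (f : ℂ → ℂ) (C' : ℝ) (hC' : 1 ≤ C')
    (hf : DifferentiableOn ℂ f (Metric.ball (0:ℂ) 1))
    (h1 : ∀ z ∈ Metric.ball (0:ℂ) 1, ‖f z‖ ≤ 1)
    (h2 : ∀ z ∈ Metric.ball (0:ℂ) 1, 1 - C' * (1 - ‖z‖ ^ 2) ≤ ‖f z‖ ^ 2)
    (h0 : ∀ z ∈ Metric.ball (0:ℂ) 1, f z ≠ 0) :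
    ‖f 0‖ = 1 ∧ ∀ z ∈ Metric.ball (0:ℂ) 1, f z = f 0 := by
  have hball0 : (0:ℂ) ∈ Metric.ball (0:ℂ) 1 := by simp
  have habs1 : ∀ z ∈ Metric.ball (0:ℂ) 1, ‖f z‖ = 1 := by
    intro z hz
    have hinv : ‖(f z)⁻¹‖ ≤ 1 := by
      apply maxmod (fun w => (f w)⁻¹) C' (by linarith) (hf.inv h0) _ z hz
      intro w hw
      have hfw : 0 < ‖f w‖ ^ 2 := by
        have h := h0 w hw
        have : 0 < ‖f w‖ := norm_pos_iff.mpr h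
        positivity
      have h2' := h2 w hw
      simp only [norm_inv]
      rw [inv_pow]
      calc (1 - C' * (1 - ‖w‖ ^ 2)) * (‖f w‖ ^ 2)⁻¹
          ≤ ‖f w‖ ^ 2 * (‖f w‖ ^ 2)⁻¹ := by
            apply mul_le_mul_of_nonneg_right h2' (by positivity)
        _ = 1 := mul_inv_cancel₀ hfw.ne'
    have hfz : f z ≠ 0 := h0 z hz
    rw [norm_inv, inv_le_one_iff₀] at hinv
    rcases hinv with h | h
    · exact absurd (le_antisymm h (norm_nonneg _)) (by simpa using hfz)
    · exact le_antisymm (h1 z hz) h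
  have hmax : IsMaxOn (norm ∘ f) (Metric.ball (0:ℂ) 1) 0 := by
    intro x hx
    simp only [Function.comp_apply, Set.mem_setOf_eq,
      habs1 x hx, habs1 0 hball0]
    exact le_refl 1
  have hconst := Complex.eqOn_of_isPreconnected_of_isMaxOn_norm
    (convex_ball (0:ℂ) 1).isPreconnected Metric.isOpen_ball hf hball0 hmax
  exact ⟨habs1 0 hball0, fun z hz => hconst hz⟩
set_option maxHeartbeats 1600000 in
lemma key_induction (C' : ℝ) (hC' : 1 ≤ C') (n : ℕ) :
    ∀ f : ℂ → ℂ,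
      DifferentiableOn ℂ f (Metric.ball (0:ℂ) 1) →
      (∀ z ∈ Metric.ball (0:ℂ) 1, ‖f z‖ ≤ 1) →
      (∀ z ∈ Metric.ball (0:ℂ) 1, 1 - C' * (1 - ‖z‖ ^ 2) ≤ ‖f z‖ ^ 2) →
      (1 - 1/(16*C'^2))^n < ‖f ((Real.sqrt (1 - 1/(4*C')) : ℝ) : ℂ)‖ ^ 2 →
      ∃ (N : ℕ) (lam : ℂ) (a : Fin N → ℂ), ‖lam‖ = 1 ∧
        (∀ k, a k ∈ Metric.ball (0 : ℂ) 1) ∧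
        ∀ z ∈ Metric.ball (0 : ℂ) 1,
          f z = lam * ∏ k, (z - a k) / (1 - starRingEnd ℂ (a k) * z) := by
  have hC0 : (0:ℝ) < C' := by linarith
  set W : ℂ := ((Real.sqrt (1 - 1/(4*C')) : ℝ) : ℂ) with hW_def
  have hWsq : ‖W‖ ^ 2 = 1 - 1/(4*C') := w0_sq C' hC'
  have hC4 : 0 < 1/(4*C') := by positivity
  have hWball : W ∈ Metric.ball (0:ℂ) 1 := by
    rw [mem_ball_zero_iff]
    nlinarith [norm_nonneg W]
  set δ : ℝ := 1/(16*C'^2) with hδ_def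
  have hδ0 : 0 < δ := by positivity
  have hδ1 : δ ≤ 1/16 := by
    rw [hδ_def]
    rw [div_le_div_iff₀ (by positivity) (by norm_num)]
    nlinarith
  induction n with
  | zero =>
    intro f _ h1 _ hlt
    exfalso
    have h := h1 W hWball
    simp only [pow_zero] at hlt
    nlinarith [norm_nonneg (f W)]
  | succ m ih =>
    intro f hd h1 h2 hlt
    by_cases hzero : ∃ a ∈ Metric.ball (0:ℂ) 1, f a = 0
    · obtain ⟨a, haball, hfa⟩ := hzero
      set A := ‖a‖ with hA_def
      have hApos : 0 ≤ A := norm_nonneg a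
      have hA1 : A < 1 := by rw [hA_def, ← mem_ball_zero_iff]; exact haball
      have hAsq : 1/C' ≤ 1 - A^2 := by
        have h := h2 a haball
        rw [hfa] at h
        simp only [norm_zero] at h
        rw [div_le_iff₀ hC0]
        nlinarith
      set f₁ : ℂ → ℂ := fun z => dslope f a z * (1 - starRingEnd ℂ a * z) with hf₁
      have hdsl : DifferentiableOn ℂ (dslope f a) (Metric.ball (0:ℂ) 1) := by
        intro x hx
        rcases eq_or_ne x a with rfl | hne
        · obtain ⟨p, hp⟩ := hd.analyticAt (Metric.isOpen_ball.mem_nhds hx)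
          exact hp.has_fpower_series_dslope_fslope.analyticAt.differentiableAt.differentiableWithinAt
        · exact ((differentiableAt_dslope_of_ne hne).mpr
            ((hd x hx).differentiableAt (Metric.isOpen_ball.mem_nhds hx))).differentiableWithinAt
      have hd1 : DifferentiableOn ℂ f₁ (Metric.ball (0:ℂ) 1) := by
        apply hdsl.mul
        exact ((differentiable_const (1:ℂ)).sub
          ((differentiable_const _).mul differentiable_id)).differentiableOn
      have hid : ∀ z : ℂ, f z * (1 - starRingEnd ℂ a * z) = (z - a) * f₁ z := by
        intro z
        have h := sub_smul_dslope f a z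
        rw [smul_eq_mul, hfa, sub_zero] at h
        rw [hf₁]
        dsimp only
        rw [← h]
        ring
      have habsid : ∀ z : ℂ, ‖f z‖^2 * ‖1 - starRingEnd ℂ a * z‖^2
          = ‖z - a‖^2 * ‖f₁ z‖^2 := by
        intro z
        have h := congrArg (fun w => ‖w‖ ^ 2) (hid z)
        simpa [norm_mul, mul_pow] using h
      have h1A : 0 < 1 - A := by linarith
      have hDlb : ∀ z : ℂ, ‖z‖ ≤ 1 →
          (1-A)^2 ≤ ‖1 - starRingEnd ℂ a * z‖^2 := by
        intro z hz
        have hh : (1:ℝ) - A * ‖z‖ ≤ ‖1 - starRingEnd ℂ a * z‖ := by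
          have h := norm_sub_norm_le (1:ℂ) (starRingEnd ℂ a * z)
          simpa [norm_mul, Complex.norm_conj] using h
        have h2' : 1 - A ≤ 1 - A * ‖z‖ := by nlinarith [norm_nonneg z]
        nlinarith [norm_nonneg (1 - starRingEnd ℂ a * z)]
      set K := (1 - A^2)/(1-A)^2 with hK_def
      have hKnn : 0 ≤ K := div_nonneg (by nlinarith) (by positivity)
      have hKid : K * (1-A)^2 = 1 - A^2 := div_mul_cancel₀ _ (by positivity)
      have h1' : ∀ z ∈ Metric.ball (0:ℂ) 1, ‖f₁ z‖ ≤ 1 := by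
        apply maxmod f₁ K hKnn hd1
        intro w hw
        have hw1 : ‖w‖ < 1 := by
          rw [← mem_ball_zero_iff]; exact hw
        set D := ‖1 - starRingEnd ℂ a * w‖^2 with hD_def
        set E := ‖w - a‖^2 with hE_def
        set s := ‖f₁ w‖^2 with hs_def
        set t := ‖f w‖^2 with ht_def
        have hDE : D - E = (1 - ‖w‖^2)*(1 - A^2) := blaschke_sq_identity a w
        have hDl : (1-A)^2 ≤ D := hDlb w hw1.le
        have hts : t * D = E * s := habsid w
        have ht1 : t ≤ 1 := by nlinarith [h1 w hw, norm_nonneg (f w)]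
        have hw2 : 0 ≤ 1 - ‖w‖^2 := by nlinarith [norm_nonneg w]
        have hD0 : 0 < D := by nlinarith
        have hE0 : 0 ≤ E := sq_nonneg _
        have hs0 : 0 ≤ s := sq_nonneg _
        have ht0 : 0 ≤ t := sq_nonneg _
        have hstep : (1 - K*(1 - ‖w‖^2)) * D ≤ E := by
          have hKw : 0 ≤ K * (1 - ‖w‖^2) := mul_nonneg hKnn hw2
          have hmm : K * (1 - ‖w‖^2) * (1-A)^2 ≤ K * (1 - ‖w‖^2) * D :=
            mul_le_mul_of_nonneg_left hDl hKw
          have hc : K * (1 - ‖w‖^2) * (1-A)^2 = (1 - ‖w‖^2)*(1-A^2) := by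
            calc K * (1 - ‖w‖^2) * (1-A)^2
                = (1 - ‖w‖^2) * (K * (1-A)^2) := by ring
              _ = (1 - ‖w‖^2) * (1 - A^2) := by rw [hKid]
          nlinarith
        have hfin : (1 - K*(1 - ‖w‖^2)) * s * D ≤ 1 * D := by
          calc (1 - K*(1 - ‖w‖^2)) * s * D
              = ((1 - K*(1 - ‖w‖^2)) * D) * s := by ring
            _ ≤ E * s := mul_le_mul_of_nonneg_right hstep hs0
            _ = t * D := hts.symm
            _ ≤ 1 * D := by nlinarith
        exact le_of_mul_le_mul_right hfin hD0
      have hge : ∀ w ∈ Metric.ball (0:ℂ) 1, ‖f w‖^2 ≤ ‖f₁ w‖^2 := by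
        intro w hw
        have hw1 : ‖w‖ < 1 := by
          rw [← mem_ball_zero_iff]; exact hw
        have hDE : ‖1 - starRingEnd ℂ a * w‖ ^ 2 - ‖w - a‖ ^ 2
            = (1 - ‖w‖ ^ 2) * (1 - A ^ 2) := blaschke_sq_identity a w
        have hDl := hDlb w hw1.le
        have hts := habsid w
        have hw2 : 0 ≤ 1 - ‖w‖^2 := by nlinarith [norm_nonneg w]
        have hD0 : 0 < ‖1 - starRingEnd ℂ a * w‖^2 := by nlinarith
        have hs0 : 0 ≤ ‖f₁ w‖^2 := sq_nonneg _
        have hA2nn : (0:ℝ) ≤ 1 - A^2 := by nlinarith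
        have hED : ‖w - a‖^2 ≤ ‖1 - starRingEnd ℂ a * w‖^2 := by
          nlinarith [mul_nonneg hw2 hA2nn]
        have hfin : ‖f w‖^2 * ‖1 - starRingEnd ℂ a * w‖^2
            ≤ ‖f₁ w‖^2 * ‖1 - starRingEnd ℂ a * w‖^2 := by
          calc ‖f w‖^2 * ‖1 - starRingEnd ℂ a * w‖^2
              = ‖w - a‖^2 * ‖f₁ w‖^2 := hts
            _ ≤ ‖1 - starRingEnd ℂ a * w‖^2 * ‖f₁ w‖^2 :=
                mul_le_mul_of_nonneg_right hED hs0
            _ = ‖f₁ w‖^2 * ‖1 - starRingEnd ℂ a * w‖^2 := mul_comm _ _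
        exact le_of_mul_le_mul_right hfin hD0
      have h2' : ∀ z ∈ Metric.ball (0:ℂ) 1,
          1 - C' * (1 - ‖z‖ ^ 2) ≤ ‖f₁ z‖ ^ 2 :=
        fun z hz => le_trans (h2 z hz) (hge z hz)
      -- measure decrease at W
      have hmeas : (1 - δ)^m < ‖f₁ W‖ ^ 2 := by
        set D := ‖1 - starRingEnd ℂ a * W‖^2 with hD_def
        set E := ‖W - a‖^2 with hE_def
        set s := ‖f₁ W‖^2 with hs_def
        set t := ‖f W‖^2 with ht_def
        have hDE : D - E = (1 - ‖W‖^2)*(1 - A^2) := blaschke_sq_identity a W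
        have hW1 : ‖W‖ < 1 := by
          rw [← mem_ball_zero_iff]; exact hWball
        have hDl : (1-A)^2 ≤ D := hDlb W hW1.le
        have hD0 : 0 < D := by nlinarith
        have hts : t * D = E * s := habsid W
        have hD4 : D ≤ 4 := by
          have h := norm_sub_le (1:ℂ) (starRingEnd ℂ a * W)
          have habsW : ‖W‖ ≤ 1 := hW1.le
          have : ‖1 - starRingEnd ℂ a * W‖ ≤ 2 := by
            have hmul : ‖starRingEnd ℂ a * W‖ ≤ 1 := by
              rw [norm_mul, Complex.norm_conj]
              nlinarith
            simp only [norm_one] at h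
            linarith
          nlinarith [norm_nonneg (1 - starRingEnd ℂ a * W)]
        have e1 : δ * D ≤ δ * 4 := mul_le_mul_of_nonneg_left hD4 hδ0.le
        have e2 : δ * 4 = (1/(4*C'))*(1/C') := by
          rw [hδ_def]; field_simp; ring
        have e3 : (1/(4*C'))*(1/C') ≤ (1/(4*C'))*(1-A^2) :=
          mul_le_mul_of_nonneg_left hAsq (by positivity)
        have hWterm : 1 - ‖W‖^2 = 1/(4*C') := by rw [hWsq]; ring
        have hED : E ≤ (1-δ)*D := by
          have : δ * D ≤ (1 - ‖W‖^2)*(1 - A^2) := by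
            rw [hWterm]; linarith
          linarith
        have hs0 : 0 ≤ s := sq_nonneg _
        have hts2 : t * D ≤ (1-δ) * s * D := by
          calc t * D = E * s := hts
            _ ≤ ((1-δ)*D) * s := mul_le_mul_of_nonneg_right hED hs0
            _ = (1-δ) * s * D := by ring
        have htls : t ≤ (1-δ)*s := le_of_mul_le_mul_right hts2 hD0
        have hpow : (1-δ)^(m+1) = (1-δ) * (1-δ)^m := by ring
        have hδ1' : 0 < 1 - δ := by linarith
        have : (1-δ) * (1-δ)^m < (1-δ) * s := by
          calc (1-δ) * (1-δ)^m = (1-δ)^(m+1) := by ring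
            _ < t := hlt
            _ ≤ (1-δ)*s := htls
        exact lt_of_mul_lt_mul_left this hδ1'.le
      obtain ⟨N, lam, aa, hlam, hain, hrep⟩ := ih f₁ hd1 h1' h2' hmeas
      refine ⟨N+1, lam, Fin.cons a aa, hlam, ?_, ?_⟩
      · intro k
        induction k using Fin.cases with
        | zero => simpa using haball
        | succ i => simpa using hain i
      · intro z hz
        have hz1 : ‖z‖ < 1 := by
          rw [← mem_ball_zero_iff]; exact hz
        have hne : (1 - starRingEnd ℂ a * z) ≠ 0 := by
          intro hcon
          have : ‖starRingEnd ℂ a * z‖ = 1 := by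
            have : (starRingEnd ℂ a * z) = 1 := by
              have := sub_eq_zero.mp hcon
              linear_combination -this
            rw [this, norm_one]
          rw [norm_mul, Complex.norm_conj] at this
          nlinarith [norm_nonneg a, norm_nonneg z]
        have hfz : f z = ((z-a)/(1 - starRingEnd ℂ a * z)) * f₁ z := by
          rw [div_mul_eq_mul_div, eq_div_iff hne]
          linear_combination hid z
        rw [hfz, hrep z hz, Fin.prod_univ_succ]
        simp only [Fin.cons_zero, Fin.cons_succ]
        ring
    · push_neg at hzero
      obtain ⟨habs0, hconst⟩ := const_of_nonvanishing f C' hC' hd h1 h2 hzero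
      refine ⟨0, f 0, Fin.elim0, habs0, fun k => k.elim0, fun z hz => ?_⟩
      simp [hconst z hz]

/-- If `b` is holomorphic on 𝔻 with `|b| ≤ 1` and `(1 − |b(z)|²)/(1 − |z|²)` is
bounded on 𝔻, then `b` is a finite Blaschke product. -/
theorem bounded_ratio_implies_blaschke (b : ℂ → ℂ)
    (hb : DifferentiableOn ℂ b (Metric.ball (0 : ℂ) 1))
    (hb1 : ∀ z ∈ Metric.ball (0 : ℂ) 1, ‖b z‖ ≤ 1)
    (hC : ∃ C : ℝ, ∀ z ∈ Metric.ball (0 : ℂ) 1,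
      (1 - ‖b z‖ ^ 2) / (1 - ‖z‖ ^ 2) ≤ C) :
    ∃ (N : ℕ) (lam : ℂ) (a : Fin N → ℂ), ‖lam‖ = 1 ∧
      (∀ k, a k ∈ Metric.ball (0 : ℂ) 1) ∧
      ∀ z ∈ Metric.ball (0 : ℂ) 1,
        b z = lam * ∏ k, (z - a k) / (1 - starRingEnd ℂ (a k) * z) := by
  obtain ⟨C, hCs⟩ := hC
  set C' : ℝ := max C 1 with hC'_def
  have hC' : 1 ≤ C' := le_max_right _ _
  have hC0 : (0:ℝ) < C' := by linarith
  have h2 : ∀ z ∈ Metric.ball (0:ℂ) 1,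
      1 - C' * (1 - ‖z‖ ^ 2) ≤ ‖b z‖ ^ 2 := by
    intro z hz
    have hz1 : ‖z‖ < 1 := by
      rw [← mem_ball_zero_iff]; exact hz
    have hpos : 0 < 1 - ‖z‖ ^ 2 := by nlinarith [norm_nonneg z]
    have h := (hCs z hz).trans (le_max_left C 1)
    rw [div_le_iff₀ hpos] at h
    linarith
  set W : ℂ := ((Real.sqrt (1 - 1/(4*C')) : ℝ) : ℂ) with hW_def
  have hWsq : ‖W‖ ^ 2 = 1 - 1/(4*C') := w0_sq C' hC'
  have hWball : W ∈ Metric.ball (0:ℂ) 1 := by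
    have hC4 : 0 < 1/(4*C') := by positivity
    rw [mem_ball_zero_iff]
    nlinarith [norm_nonneg W]
  have hWlow : 3/4 ≤ ‖b W‖ ^ 2 := by
    have h := h2 W hWball
    have hcalc : C' * (1 - ‖W‖ ^ 2) = 1/4 := by
      rw [hWsq]
      field_simp
      ring
    rw [hcalc] at h
    linarith
  have hδ0 : (0:ℝ) < 1/(16*C'^2) := by positivity
  obtain ⟨n, hn⟩ := exists_pow_lt_of_lt_one (show (0:ℝ) < ‖b W‖ ^ 2 by linarith)
    (show 1 - 1/(16*C'^2) < 1 by linarith)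
  exact key_induction C' hC' n b hb hb1 h2 hn
end
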